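/- Let (G, v₀) be a multiplayer quantitative reachability game, Γ = 2·|Π|·|V|, and d = Γ + 3·|V|. If there exists a goal-optimal and dev-optimal secure equilibrium in the truncated game 𝒯^d, then there exists a secure equilibrium in (G, v₀) that is finite-memory. -/

import Mathlib

open scoped Classical ENat

/-- A multiplayer quantitative reachability game: a finite directed graph whose
vertices are partitioned among the players (via `owner`), every vertex has an
outgoing edge, and each player `i` has a nonempty goal set `F i`. -/
structure QRGame (ι V : Type) where
  owner : V → ι
  E : V → V → Prop
  total : ∀ v, ∃ w, E v w
  F : ι → Set V
  F_ne : ∀ i, (F i).Nonempty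

namespace QRGame

variable {ι V : Type}

/-- Histories are encoded as *reversed* nonempty lists: the head is the current
vertex, the last element is the initial vertex `v₀`, and consecutive elements
are joined by edges of the graph. -/
def IsHist (G : QRGame ι V) (v₀ : V) : List V → Prop
  | [] => False
  | [v] => v = v₀
  | v :: w :: t => G.E w v ∧ IsHist G v₀ (w :: t)

/-- The current (i.e. most recent) vertex of a history. -/
def cur (v₀ : V) (h : List V) : V := h.headD v₀

/-- `σ` is a valid strategy of player `i`: on every history whose current
vertex belongs to player `i`, it chooses a successor along an edge. -/
def IsStrat (G : QRGame ι V) (v₀ : V) (i : ι) (σ : List V → V) : Prop :=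
  ∀ h : List V, G.IsHist v₀ h → G.owner (cur v₀ h) = i → G.E (cur v₀ h) (σ h)

/-- A strategy profile: one valid strategy for each player. -/
def IsProfile (G : QRGame ι V) (v₀ : V) (σ : ι → List V → V) : Prop :=
  ∀ i, G.IsStrat v₀ i (σ i)

/-- The history reached after `n` further steps when all players follow the
profile `σ` from the history `h` on. -/
def histFrom (G : QRGame ι V) (v₀ : V) (σ : ι → List V → V) (h : List V) : ℕ → List V
  | 0 => h
  | n + 1 =>
      σ (G.owner (cur v₀ (histFrom G v₀ σ h n))) (histFrom G v₀ σ h n)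
        :: histFrom G v₀ σ h n

/-- The full play (indexed from time `0`) whose prefix is the history `h` and
which is consistent with the profile `σ` after `h`. -/
def fullPlay (G : QRGame ι V) (v₀ : V) (σ : ι → List V → V) (h : List V) (t : ℕ) : V :=
  (G.histFrom v₀ σ h t).reverse.getD t v₀

/-- The outcome `⟨(σ_i)⟩_{v₀}` of the profile `σ` from the initial vertex. -/
def outcome (G : QRGame ι V) (v₀ : V) (σ : ι → List V → V) : ℕ → V :=
  G.fullPlay v₀ σ [v₀]

/-- Cost of player `i` for a play `ρ`: the least `l` with `ρ l ∈ F i`,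
and `⊤` (i.e. `+∞`) if there is no such `l`. -/
noncomputable def cost (G : QRGame ι V) (i : ι) (ρ : ℕ → V) : ℕ∞ :=
  ⨅ l ∈ {l : ℕ | ρ l ∈ G.F i}, (l : ℕ∞)

/-- Cost of player `i` for the finite prefix `ρ₀ … ρ_{m-1}` of a play. -/
noncomputable def costLT (G : QRGame ι V) (i : ι) (ρ : ℕ → V) (m : ℕ) : ℕ∞ :=
  ⨅ l ∈ {l : ℕ | l < m ∧ ρ l ∈ G.F i}, (l : ℕ∞)

end QRGame

/-- The preference relation `≺_j` of player `j` on cost profiles: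
`x ≺_j y` iff `x j > y j`, or `x j = y j`, every player's cost does not
decrease, and some player's cost strictly increases. -/
def Prec {ι : Type} (j : ι) (x y : ι → ℕ∞) : Prop :=
  y j < x j ∨ (x j = y j ∧ (∀ i, x i ≤ y i) ∧ ∃ i, x i < y i)

namespace QRGame

variable {ι V : Type} [DecidableEq ι]

/-- `σ` restricted after the history `h` is a secure equilibrium in the subgame
`(G|_h, cur h)`: no player `j` has a `≺_j`-profitable deviation after `h`
(costs are computed on the whole play, including the prefix `h`). -/
def IsSecureAfter (G : QRGame ι V) (v₀ : V) (σ : ι → List V → V) (h : List V) : Prop :=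
  ¬ ∃ (j : ι) (σ' : List V → V), G.IsStrat v₀ j σ' ∧
      Prec j (fun i => G.cost i (G.fullPlay v₀ σ h))
        (fun i => G.cost i (G.fullPlay v₀ (Function.update σ j σ') h))

/-- A secure equilibrium in `(G, v₀)`. -/
def IsSecure (G : QRGame ι V) (v₀ : V) (σ : ι → List V → V) : Prop :=
  G.IsSecureAfter v₀ σ [v₀]

/-- A subgame perfect secure equilibrium: a secure equilibrium in every subgame. -/
def IsSPSE (G : QRGame ι V) (v₀ : V) (σ : ι → List V → V) : Prop :=
  ∀ h : List V, G.IsHist v₀ h → G.IsSecureAfter v₀ σ h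

end QRGame

namespace QRGame

variable {ι V : Type}

/-- A strategy is finite-memory if the equivalence relation identifying two
histories `h`, `h'` whenever `σ` answers the same on `hδ` and `h'δ` for every
continuation `δ` has finite index; equivalently, the map sending a history to
the induced answering function has finite range.  (Histories are reversed
lists, so the continuation `δ` is appended in front.) -/
def FinMem (σ : List V → V) : Prop :=
  (Set.range fun h : List V => fun δ : List V => σ (δ ++ h)).Finite

end QRGame

namespace QRGame

variable {ι V : Type}

/-- `σ` is a valid strategy of player `i` in the truncated game `𝒯^d` played on
the truncation of the unraveling of `G` to depth `d`: it chooses a successor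
along an edge on every history of length (number of edges) `< d`, i.e. on every
history whose list of vertices has length `≤ d`. -/
def IsStratTrunc (G : QRGame ι V) (v₀ : V) (d : ℕ) (i : ι) (σ : List V → V) : Prop :=
  ∀ h : List V, G.IsHist v₀ h → h.length ≤ d →
    G.owner (cur v₀ h) = i → G.E (cur v₀ h) (σ h)

end QRGame

namespace QRGame

variable {ι V : Type} [DecidableEq ι]

/-- `σ` restricted after the history `h` is a secure equilibrium in the subgame
of the truncated game `𝒯^d` after `h`: costs are computed on the prefix of the
play of length `d` (vertices of indices `0, …, d`). -/
def IsSecureTruncAfter (G : QRGame ι V) (v₀ : V) (d : ℕ)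
    (σ : ι → List V → V) (h : List V) : Prop :=
  ¬ ∃ (j : ι) (σ' : List V → V), G.IsStratTrunc v₀ d j σ' ∧
      Prec j (fun i => G.costLT i (G.fullPlay v₀ σ h) (d + 1))
        (fun i => G.costLT i (G.fullPlay v₀ (Function.update σ j σ') h) (d + 1))

/-- A secure equilibrium in the truncated game `𝒯^d`. -/
def IsSecureTrunc (G : QRGame ι V) (v₀ : V) (d : ℕ) (σ : ι → List V → V) : Prop :=
  G.IsSecureTruncAfter v₀ d σ [v₀]

/-- A subgame perfect secure equilibrium in the truncated game `𝒯^d`: a secure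
equilibrium in the subgame after every history of the truncated tree. -/
def IsSPSETrunc (G : QRGame ι V) (v₀ : V) (d : ℕ) (σ : ι → List V → V) : Prop :=
  ∀ h : List V, G.IsHist v₀ h → h.length ≤ d + 1 → G.IsSecureTruncAfter v₀ d σ h

end QRGame

namespace QRGame

variable {ι V : Type} [Fintype V]

/-- Goal-optimality (with bound `Γ`) in the truncated game `𝒯^d`: costs are
computed on the outcome of the truncated game, i.e. on the prefix of length `d`. -/
noncomputable def GoalOptTrunc (G : QRGame ι V) (v₀ : V) (d : ℕ)
    (σ : ι → List V → V) (Γ : ℕ) : Prop :=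
  ∀ i, G.costLT i (G.outcome v₀ σ) (d + 1) ≠ ⊤ →
    G.costLT i (G.outcome v₀ σ) (d + 1) < (Γ : ℕ∞)

/-- The bound `D = max{Cost_i(ρ) : Cost_i(ρ) < +∞} + |V|` attached to the
outcome of a profile in the truncated game `𝒯^d`. -/
noncomputable def devBoundTrunc (G : QRGame ι V) (v₀ : V) (d : ℕ)
    (σ : ι → List V → V) : ℕ :=
  (⨆ i ∈ {i : ι | G.costLT i (G.outcome v₀ σ) (d + 1) ≠ ⊤},
      G.costLT i (G.outcome v₀ σ) (d + 1)).toNat + Fintype.card V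

variable [DecidableEq ι]

/-- Dev-optimality of a secure equilibrium in the truncated game `𝒯^d`. -/
noncomputable def DevOptTrunc (G : QRGame ι V) (v₀ : V) (d : ℕ)
    (σ : ι → List V → V) : Prop :=
  ∀ (j : ι) (σ' : List V → V), G.IsStratTrunc v₀ d j σ' →
    ¬ Prec j
        (fun i => G.costLT i (G.outcome v₀ σ) (G.devBoundTrunc v₀ d σ))
        (fun i => G.costLT i (G.outcome v₀ (Function.update σ j σ'))
          (G.devBoundTrunc v₀ d σ))

end QRGame

/-! ### Auxiliary development for the proof -/

namespace QRGame

variable {ι V : Type}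

section CostLemmas

variable (G : QRGame ι V) (i : ι) (ρ ρ' : ℕ → V)

lemma cost_le {m : ℕ} (hm : ρ m ∈ G.F i) : G.cost i ρ ≤ m := iInf₂_le m hm

lemma cost_eq_top_iff : G.cost i ρ = ⊤ ↔ ∀ l, ρ l ∉ G.F i := by
  constructor
  · intro h l hl
    have h1 := G.cost_le i ρ hl
    rw [h, top_le_iff] at h1
    exact (ENat.coe_ne_top l) h1
  · intro h
    rw [cost, iInf_eq_top]
    intro l
    rw [iInf_eq_top]
    intro hl
    exact absurd hl (h l)

lemma cost_eq {m : ℕ} (hm : ρ m ∈ G.F i) (hmin : ∀ k < m, ρ k ∉ G.F i) :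
    G.cost i ρ = m := by
  refine le_antisymm (G.cost_le i ρ hm) ?_
  rw [cost, le_iInf₂_iff]
  intro l hl
  exact_mod_cast Nat.cast_le.2 (not_lt.1 fun hlt => hmin l hlt hl)

lemma cost_spec (h : G.cost i ρ ≠ ⊤) :
    ∃ m : ℕ, G.cost i ρ = m ∧ ρ m ∈ G.F i ∧ ∀ k < m, ρ k ∉ G.F i := by
  have hne : {l : ℕ | ρ l ∈ G.F i}.Nonempty := by
    by_contra hcon
    rw [Set.not_nonempty_iff_eq_empty, Set.eq_empty_iff_forall_notMem] at hcon
    exact h ((G.cost_eq_top_iff i ρ).2 hcon)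
  have hmem := Nat.sInf_mem hne
  have hmin : ∀ k < sInf {l : ℕ | ρ l ∈ G.F i}, ρ k ∉ G.F i :=
    fun k hk => Nat.notMem_of_lt_sInf hk
  exact ⟨_, G.cost_eq i ρ hmem hmin, hmem, hmin⟩

lemma costLT_le {m l : ℕ} (hl : l < m) (hm : ρ l ∈ G.F i) : G.costLT i ρ m ≤ l :=
  iInf₂_le l ⟨hl, hm⟩

lemma costLT_eq_top_iff (m : ℕ) : G.costLT i ρ m = ⊤ ↔ ∀ l < m, ρ l ∉ G.F i := by
  constructor
  · intro h l hl hmem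
    have h1 := G.costLT_le i ρ hl hmem
    rw [h, top_le_iff] at h1
    exact (ENat.coe_ne_top l) h1
  · intro h
    rw [costLT, iInf_eq_top]
    intro l
    rw [iInf_eq_top]
    intro hl
    exact absurd hl.2 (h l hl.1)

lemma costLT_eq {m k : ℕ} (hk : k < m) (hm : ρ k ∈ G.F i) (hmin : ∀ l < k, ρ l ∉ G.F i) :
    G.costLT i ρ m = k := by
  refine le_antisymm (G.costLT_le i ρ hk hm) ?_
  rw [costLT, le_iInf₂_iff]
  intro l hl
  exact_mod_cast Nat.cast_le.2 (not_lt.1 fun hlt => hmin l hlt hl.2)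

lemma costLT_spec {m : ℕ} (h : G.costLT i ρ m ≠ ⊤) :
    ∃ k : ℕ, k < m ∧ G.costLT i ρ m = k ∧ ρ k ∈ G.F i ∧ ∀ l < k, ρ l ∉ G.F i := by
  have hne : {l : ℕ | l < m ∧ ρ l ∈ G.F i}.Nonempty := by
    by_contra hcon
    rw [Set.not_nonempty_iff_eq_empty, Set.eq_empty_iff_forall_notMem] at hcon
    refine h ((G.costLT_eq_top_iff i ρ m).2 fun l hl hmem => hcon l ⟨hl, hmem⟩)
  have hmem := Nat.sInf_mem hne
  have hmin : ∀ l < sInf {l : ℕ | l < m ∧ ρ l ∈ G.F i}, ρ l ∉ G.F i := by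
    intro l hl hmem2
    exact Nat.notMem_of_lt_sInf hl ⟨hl.trans hmem.1, hmem2⟩
  exact ⟨_, hmem.1, G.costLT_eq i ρ hmem.1 hmem.2 hmin, hmem.2, hmin⟩

lemma costLT_congr {m : ℕ} (hag : ∀ k < m, ρ k = ρ' k) :
    G.costLT i ρ m = G.costLT i ρ' m := by
  have : {l : ℕ | l < m ∧ ρ l ∈ G.F i} = {l : ℕ | l < m ∧ ρ' l ∈ G.F i} := by
    ext l
    exact and_congr_right fun hl => by rw [hag l hl]
  rw [costLT, costLT, this]

lemma costLT_eq_cost {m : ℕ} (h : G.cost i ρ < (m : ℕ∞)) :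
    G.costLT i ρ m = G.cost i ρ := by
  obtain ⟨k, hck, hk, hmin⟩ := G.cost_spec i ρ (by intro hcon; rw [hcon] at h; exact (not_top_lt h).elim)
  have hkm : k < m := by rwa [hck, Nat.cast_lt] at h
  rw [hck, G.costLT_eq i ρ hkm hk hmin]

lemma costLT_eq_top_of_le {m : ℕ} (h : (m : ℕ∞) ≤ G.cost i ρ) :
    G.costLT i ρ m = ⊤ := by
  rw [costLT_eq_top_iff]
  intro l hl hmem
  have := (G.cost_le i ρ hmem).trans_lt (lt_of_lt_of_le (by exact_mod_cast hl) h)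
  exact lt_irrefl _ this

lemma cost_of_costLT_ne_top {m : ℕ} (h : G.costLT i ρ m ≠ ⊤) :
    G.cost i ρ = G.costLT i ρ m ∧ G.costLT i ρ m < (m : ℕ∞) := by
  obtain ⟨k, hkm, hck, hk, hmin⟩ := G.costLT_spec i ρ h
  rw [hck]
  exact ⟨G.cost_eq i ρ hk hmin, by exact_mod_cast hkm⟩

end CostLemmas

end QRGame

namespace QRGame

section PlayLemmas

variable (G : QRGame ι V) (v₀ : V) (p q : ι → List V → V)

lemma histFrom_length (h : List V) : ∀ n, (G.histFrom v₀ p h n).length = h.length + n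
  | 0 => rfl
  | n + 1 => by
      rw [histFrom, List.length_cons, histFrom_length h n]
      omega

lemma rev_getD_head (x : V) (l : List V) : (x :: l).reverse.getD l.length v₀ = x := by
  rw [List.reverse_cons, List.getD_append_right _ _ _ _ (by simp)]
  simp

lemma outcome_eq_cur : ∀ t, G.outcome v₀ p t = cur v₀ (G.histFrom v₀ p [v₀] t)
  | 0 => rfl
  | t + 1 => by
      show (G.histFrom v₀ p [v₀] (t + 1)).reverse.getD (t + 1) v₀ = _
      have hlen : (G.histFrom v₀ p [v₀] t).length = t + 1 := by
        rw [histFrom_length]; simp [Nat.add_comm]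
      rw [histFrom, ← hlen, rev_getD_head]
      rfl

lemma outcome_succ (t : ℕ) :
    G.outcome v₀ p (t + 1) =
      p (G.owner (G.outcome v₀ p t)) (G.histFrom v₀ p [v₀] t) := by
  rw [outcome_eq_cur, outcome_eq_cur, histFrom]
  rfl

lemma outcome_zero : G.outcome v₀ p 0 = v₀ := rfl

lemma histFrom_getD : ∀ t k, k ≤ t →
    (G.histFrom v₀ p [v₀] t).reverse.getD k v₀ = G.outcome v₀ p k := by
  intro t
  induction t with
  | zero => intro k hk; interval_cases k; rfl
  | succ n ih =>
    intro k hk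
    rcases Nat.lt_or_ge k (n + 1) with hlt | hge
    · have hlen : (G.histFrom v₀ p [v₀] n).reverse.length = n + 1 := by
        rw [List.length_reverse, histFrom_length]; simp [Nat.add_comm]
      rw [histFrom, List.reverse_cons, List.getD_append _ _ _ _ (by omega), ih k (by omega)]
    · have hk1 : k = n + 1 := by omega
      subst hk1
      rfl

lemma isHist_hst (T : ℕ)
    (hp : ∀ h, G.IsHist v₀ h → h.length ≤ T → G.E (cur v₀ h) (p (G.owner (cur v₀ h)) h)) :
    ∀ t, t ≤ T → G.IsHist v₀ (G.histFrom v₀ p [v₀] t) := by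
  intro t
  induction t with
  | zero => intro _; simp [histFrom, IsHist]
  | succ n ih =>
    intro hn
    have hih := ih (Nat.le_of_succ_le hn)
    obtain ⟨w, tl, hwtl⟩ : ∃ w tl, G.histFrom v₀ p [v₀] n = w :: tl := by
      cases hh : G.histFrom v₀ p [v₀] n with
      | nil =>
          have := G.histFrom_length v₀ p [v₀] n
          rw [hh] at this
          simp at this
          omega
      | cons w tl => exact ⟨w, tl, rfl⟩
    have hedge := hp _ hih (by rw [histFrom_length]; simp; omega)
    show G.IsHist v₀ (p (G.owner (cur v₀ (G.histFrom v₀ p [v₀] n))) (G.histFrom v₀ p [v₀] n)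
      :: G.histFrom v₀ p [v₀] n)
    rw [hwtl] at hedge hih ⊢
    exact ⟨hedge, hih⟩

lemma edge_outcome (T : ℕ)
    (hp : ∀ h, G.IsHist v₀ h → h.length ≤ T → G.E (cur v₀ h) (p (G.owner (cur v₀ h)) h))
    (t : ℕ) (ht : t + 1 ≤ T) :
    G.E (G.outcome v₀ p t) (G.outcome v₀ p (t + 1)) := by
  have h1 := G.isHist_hst v₀ p T hp t (by omega)
  have h2 := hp _ h1 (by rw [histFrom_length]; simp; omega)
  rw [outcome_succ, outcome_eq_cur]
  exact h2

lemma hst_agree (T : ℕ) (hag : ∀ i h, h.length ≤ T → p i h = q i h) :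
    ∀ t ≤ T, G.histFrom v₀ p [v₀] t = G.histFrom v₀ q [v₀] t := by
  intro t
  induction t with
  | zero => intro _; rfl
  | succ n ih =>
    intro hn
    have h1 := ih (by omega)
    show _ :: _ = _ :: _
    rw [h1, hag _ _ (by rw [histFrom_length]; simp; omega)]

lemma outcome_agree (T : ℕ) (hag : ∀ i h, h.length ≤ T → p i h = q i h)
    (t : ℕ) (ht : t ≤ T) : G.outcome v₀ p t = G.outcome v₀ q t := by
  rw [outcome_eq_cur, outcome_eq_cur, G.hst_agree v₀ p q T hag t ht]

end PlayLemmas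

section Attractor

variable (G : QRGame ι V)

noncomputable def choiceTotal (v : V) : V := (G.total v).choose

lemma choiceTotal_edge (v : V) : G.E v (G.choiceTotal v) := (G.total v).choose_spec

def Astep (j : ι) (S : Set V) : Set V :=
  S ∪ {v | (G.owner v = j ∧ ∃ w, G.E v w ∧ w ∈ S) ∨ (G.owner v ≠ j ∧ ∀ w, G.E v w → w ∈ S)}

def A (j : ι) : ℕ → Set V
  | 0 => G.F j
  | k + 1 => G.Astep j (A j k)

lemma A_succ (j : ι) (k : ℕ) : G.A j (k + 1) = G.Astep j (G.A j k) := rfl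

lemma A_mono_succ (j : ι) (k : ℕ) : G.A j k ⊆ G.A j (k + 1) := by
  rw [A_succ]
  exact Set.subset_union_left

lemma A_mono (j : ι) {k m : ℕ} (h : k ≤ m) : G.A j k ⊆ G.A j m := by
  induction m with
  | zero => exact (Nat.le_zero.1 h) ▸ subset_rfl
  | succ n ih =>
    rcases Nat.lt_or_ge k (n + 1) with h1 | h1
    · exact (ih (by omega)).trans (G.A_mono_succ j n)
    · have : k = n + 1 := by omega
      rw [this]

lemma F_subset_A (j : ι) (k : ℕ) : G.F j ⊆ G.A j k := G.A_mono j (Nat.zero_le k)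

variable [Fintype V]

noncomputable def W (j : ι) : Set V := G.A j (Fintype.card V)

lemma A_const (j : ι) {k : ℕ} (h : G.A j (k + 1) = G.A j k) :
    ∀ m, k ≤ m → G.A j m = G.A j k := by
  intro m hm
  induction m with
  | zero => rw [Nat.le_zero.1 hm]
  | succ n ih =>
    rcases Nat.lt_or_ge k (n + 1) with h1 | h1
    · have hn := ih (by omega)
      rw [G.A_succ j n, hn, ← G.A_succ j k, h]
    · have : k = n + 1 := by omega
      rw [this]

lemma W_fix (j : ι) : G.Astep j (G.W j) = G.W j := by
  have hex : ∃ k < Fintype.card V, G.A j (k + 1) = G.A j k := by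
    by_contra hcon
    push_neg at hcon
    have hcard : ∀ k ≤ Fintype.card V, k + 1 ≤ (G.A j k).ncard := by
      intro k
      induction k with
      | zero =>
        intro _
        have : (G.A j 0).Nonempty := G.F_ne j
        exact (Set.ncard_pos (Set.toFinite _)).2 this
      | succ n ih =>
        intro hn
        have hss : G.A j n ⊂ G.A j (n + 1) :=
          HasSubset.Subset.ssubset_of_ne (G.A_mono_succ j n) (fun he => hcon n (by omega) he.symm)
        have := Set.ncard_lt_ncard hss (Set.toFinite _)
        have h2 := ih (by omega)
        omega
    have h1 := hcard (Fintype.card V) le_rfl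
    have h2 : (G.A j (Fintype.card V)).ncard ≤ Fintype.card V := by
      have := Set.ncard_le_ncard (Set.subset_univ (G.A j (Fintype.card V))) (Set.toFinite _)
      rwa [Set.ncard_univ, Nat.card_eq_fintype_card] at this
    omega
  obtain ⟨k, hk, hfix⟩ := hex
  have h1 := G.A_const j hfix (Fintype.card V) (by omega)
  have h2 := G.A_const j hfix (Fintype.card V + 1) (by omega)
  show G.Astep j (G.A j (Fintype.card V)) = _
  rw [← G.A_succ j, h2]
  show _ = G.A j (Fintype.card V)
  rw [h1]

lemma W_succ_not_mem (j : ι) {v w : V} (hv : v ∉ G.W j) (ho : G.owner v = j)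
    (hw : G.E v w) : w ∉ G.W j := by
  intro hmem
  exact hv (by rw [← G.W_fix j]; exact Or.inr (Or.inl ⟨ho, w, hw, hmem⟩))

lemma W_exists_safe (j : ι) {v : V} (hv : v ∉ G.W j) (ho : G.owner v ≠ j) :
    ∃ w, G.E v w ∧ w ∉ G.W j := by
  by_contra hcon
  push_neg at hcon
  exact hv (by rw [← G.W_fix j]; exact Or.inr (Or.inr ⟨ho, hcon⟩))

lemma F_subset_W (j : ι) : G.F j ⊆ G.W j := G.F_subset_A j _

noncomputable def rk (j : ι) (v : V) : ℕ := sInf {k | v ∈ G.A j k}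

noncomputable def atr (j : ι) (v : V) : V :=
  if h : 0 < G.rk j v ∧ ∃ w, G.E v w ∧ w ∈ G.A j (G.rk j v - 1) then h.2.choose
  else G.choiceTotal v

lemma atr_edge (j : ι) (v : V) : G.E v (G.atr j v) := by
  rw [atr]
  split
  · next h => exact h.2.choose_spec.1
  · exact G.choiceTotal_edge v

lemma atr_mem (j : ι) {v : V} {n : ℕ} (hv : v ∈ G.A j (n + 1)) (hnv : v ∉ G.A j n)
    (ho : G.owner v = j) : G.atr j v ∈ G.A j n := by
  have hrk : G.rk j v = n + 1 := by
    refine le_antisymm (Nat.sInf_le hv) (le_csInf ⟨n + 1, hv⟩ ?_)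
    intro b hb
    by_contra hlt
    exact hnv (G.A_mono j (by omega) hb)
  obtain ⟨w, hw, hmem⟩ : ∃ w, G.E v w ∧ w ∈ G.A j n := by
    rcases hv with h | h
    · exact absurd h hnv
    rcases h with ⟨_, w, hw, hmem⟩ | ⟨ho2, _⟩
    · exact ⟨w, hw, hmem⟩
    · exact absurd ho ho2
  have hcond : 0 < G.rk j v ∧ ∃ w, G.E v w ∧ w ∈ G.A j (G.rk j v - 1) := by
    rw [hrk]
    exact ⟨by omega, w, hw, by simpa using hmem⟩
  rw [atr, dif_pos hcond]
  have hmem' := hcond.2.choose_spec.2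
  exact G.A_mono j (by omega : G.rk j v - 1 ≤ n) hmem'

noncomputable def safe (j : ι) (v : V) : V :=
  if h : ∃ w, G.E v w ∧ w ∉ G.W j then h.choose else G.choiceTotal v

lemma safe_edge (j : ι) (v : V) : G.E v (G.safe j v) := by
  rw [safe]
  split
  · next h => exact h.choose_spec.1
  · exact G.choiceTotal_edge v

lemma safe_not_mem (j : ι) {v : V} (hv : v ∉ G.W j) (ho : G.owner v ≠ j) :
    G.safe j v ∉ G.W j := by
  have hcond := G.W_exists_safe j hv ho
  rw [safe, dif_pos hcond]
  exact hcond.choose_spec.2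

lemma attr_reach (j : ι) (p : ℕ → V) :
    ∀ n s, p s ∈ G.A j n →
    (∀ t, s ≤ t → t < s + n → G.E (p t) (p (t + 1))) →
    (∀ t, s ≤ t → t < s + n → G.owner (p t) = j → p (t + 1) = G.atr j (p t)) →
    ∃ l, s ≤ l ∧ l ≤ s + n ∧ p l ∈ G.F j := by
  intro n
  induction n with
  | zero =>
    intro s hs _ _
    exact ⟨s, le_rfl, by omega, hs⟩
  | succ n ih =>
    intro s hs hE hA
    by_cases hn : p s ∈ G.A j n
    · obtain ⟨l, h1, h2, h3⟩ := ih s hn (fun t h1 h2 => hE t h1 (by omega))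
        (fun t h1 h2 => hA t h1 (by omega))
      exact ⟨l, h1, by omega, h3⟩
    · have hnext : p (s + 1) ∈ G.A j n := by
        have hsu := hs
        rw [G.A_succ] at hsu
        rcases hsu with h | h
        · exact absurd h hn
        rcases h with ⟨ho, _⟩ | ⟨ho, hall⟩
        · have hps : p (s + 1) = G.atr j (p s) := hA s le_rfl (by omega) ho
          rw [hps]
          exact G.atr_mem j hs hn ho
        · exact hall _ (hE s le_rfl (by omega))
      obtain ⟨l, h1, h2, h3⟩ := ih (s + 1) hnext (fun t h1 h2 => hE t (by omega) (by omega))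
        (fun t h1 h2 => hA t (by omega) (by omega))
      exact ⟨l, by omega, by omega, h3⟩

end Attractor

section Avoidance

variable [Fintype V] [DecidableEq ι]
variable (G : QRGame ι V) (v₀ : V)

lemma profile_edge_prop {σ : ι → List V → V} {d : ℕ} (hσ : ∀ i, G.IsStratTrunc v₀ d i (σ i)) :
    ∀ h, G.IsHist v₀ h → h.length ≤ d → G.E (cur v₀ h) (σ (G.owner (cur v₀ h)) h) :=
  fun h hh hlen => hσ _ h hh hlen rfl

lemma avoid_W {σ : ι → List V → V} {d : ℕ} (hσ : ∀ i, G.IsStratTrunc v₀ d i (σ i))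
    (hsec : G.IsSecureTrunc v₀ d σ) {j : ι}
    (hj : G.costLT j (G.outcome v₀ σ) (d + 1) = ⊤)
    {σ'' : List V → V} (hσ'' : G.IsStratTrunc v₀ d j σ'')
    {s : ℕ} (hs : s + Fintype.card V ≤ d) :
    G.outcome v₀ (Function.update σ j σ'') s ∉ G.W j := by
  by_contra hmem
  set σ3 : List V → V := fun h => if h.length ≤ s then σ'' h else G.atr j (cur v₀ h) with hσ3
  have hσ3ap : ∀ h : List V, s < h.length → σ3 h = G.atr j (cur v₀ h) := by
    intro h hh
    simp only [hσ3]
    rw [if_neg (by omega)]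
  have hσ3ap2 : ∀ h : List V, h.length ≤ s → σ3 h = σ'' h := by
    intro h hh
    simp only [hσ3]
    rw [if_pos hh]
  have hstrat3 : G.IsStratTrunc v₀ d j σ3 := by
    intro h hh hlen ho
    simp only [hσ3]
    split
    · exact hσ'' h hh hlen ho
    · exact G.atr_edge j _
  have hagree : ∀ i (h : List V), h.length ≤ s →
      Function.update σ j σ3 i h = Function.update σ j σ'' i h := by
    intro i h hlen
    by_cases hij : i = j
    · subst hij
      rw [Function.update_self, Function.update_self, hσ3ap2 _ hlen]
    · rw [Function.update_of_ne hij, Function.update_of_ne hij]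
  have hout_s : G.outcome v₀ (Function.update σ j σ3) s
      = G.outcome v₀ (Function.update σ j σ'') s :=
    G.outcome_agree v₀ _ _ s hagree s le_rfl
  have hpq : ∀ h, G.IsHist v₀ h → h.length ≤ d →
      G.E (cur v₀ h) (Function.update σ j σ3 (G.owner (cur v₀ h)) h) := by
    intro h hh hlen
    by_cases hij : G.owner (cur v₀ h) = j
    · rw [hij, Function.update_self]
      simp only [hσ3]
      split
      · exact hσ'' h hh hlen hij
      · exact G.atr_edge j _
    · rw [Function.update_of_ne hij]
      exact hσ _ h hh hlen rfl
  have hE : ∀ t, s ≤ t → t < s + Fintype.card V →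
      G.E (G.outcome v₀ (Function.update σ j σ3) t)
        (G.outcome v₀ (Function.update σ j σ3) (t + 1)) :=
    fun t _ h2 => G.edge_outcome v₀ _ d hpq t (by omega)
  have hA : ∀ t, s ≤ t → t < s + Fintype.card V →
      G.owner (G.outcome v₀ (Function.update σ j σ3) t) = j →
      G.outcome v₀ (Function.update σ j σ3) (t + 1)
        = G.atr j (G.outcome v₀ (Function.update σ j σ3) t) := by
    intro t h1 h2 ho
    rw [G.outcome_succ v₀ _ t, ho, Function.update_self,
      hσ3ap _ (by rw [G.histFrom_length]; simp; omega), ← G.outcome_eq_cur]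
  obtain ⟨l, hl1, hl2, hl3⟩ := G.attr_reach j (G.outcome v₀ (Function.update σ j σ3))
    (Fintype.card V) s (by rw [hout_s]; exact hmem) hE hA
  refine hsec ⟨j, σ3, hstrat3, Or.inl ?_⟩
  show G.costLT j (G.fullPlay v₀ (Function.update σ j σ3) [v₀]) (d + 1)
      < G.costLT j (G.fullPlay v₀ σ [v₀]) (d + 1)
  have h1 : G.costLT j (G.outcome v₀ (Function.update σ j σ3)) (d + 1) ≤ l :=
    G.costLT_le j _ (by omega) hl3
  have h2 : G.costLT j (G.fullPlay v₀ σ [v₀]) (d + 1) = ⊤ := hj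
  rw [h2]
  exact lt_of_le_of_lt h1 (ENat.coe_lt_top l)

end Avoidance

section Construction

variable [Fintype V] [Fintype ι] [DecidableEq ι]
variable (G : QRGame ι V) (v₀ : V) (σ : ι → List V → V) (a b L : ℕ)

/-- The eventually periodic main path. -/
noncomputable def piP (t : ℕ) : V :=
  if t < b then G.outcome v₀ σ t else G.outcome v₀ σ (a + (t - a) % (b - a))

/-- `h` is (the reverse of) a prefix of the main path. -/
def OnP (h : List V) : Prop :=
  ∀ k < h.length, h.reverse.getD k v₀ = G.piP v₀ σ a b k

/-- The first index where `h` leaves the main path. -/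
noncomputable def devP (h : List V) : ℕ :=
  sInf {k | k < h.length ∧ h.reverse.getD k v₀ ≠ G.piP v₀ σ a b k}

/-- The constructed finite-memory profile (same strategy for every player). -/
noncomputable def nxt (h : List V) : V :=
  if G.OnP v₀ σ a b h then G.piP v₀ σ a b h.length
  else if G.devP v₀ σ a b h ≤ b + 1 ∧ h.length ≤ L then σ (G.owner (cur v₀ h)) h
  else G.safe (G.owner (G.piP v₀ σ a b (G.devP v₀ σ a b h - 1))) (cur v₀ h)

variable {a b}

lemma piP_zero (hb : 0 < b) : G.piP v₀ σ a b 0 = v₀ := by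
  rw [piP, if_pos hb]
  rfl

lemma piP_eq_outcome (hab : a < b) (hρ : G.outcome v₀ σ a = G.outcome v₀ σ b) :
    ∀ t ≤ b, G.piP v₀ σ a b t = G.outcome v₀ σ t := by
  intro t ht
  rw [piP]
  rcases Nat.lt_or_ge t b with h | h
  · rw [if_pos h]
  · have htb : t = b := by omega
    subst htb
    rw [if_neg (by omega), Nat.mod_self, Nat.add_zero]
    exact hρ

lemma piP_loop (hab : a < b) (t : ℕ) (ht : a ≤ t) :
    G.piP v₀ σ a b t = G.outcome v₀ σ (a + (t - a) % (b - a)) := by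
  rw [piP]
  rcases Nat.lt_or_ge t b with h | h
  · rw [if_pos h, Nat.mod_eq_of_lt (by omega)]
    congr 1
    omega
  · rw [if_neg (by omega)]

lemma piP_val (hab : a < b) (t : ℕ) : ∃ s ≤ b, G.piP v₀ σ a b t = G.outcome v₀ σ s := by
  rw [piP]
  rcases Nat.lt_or_ge t b with h | h
  · rw [if_pos h]
    exact ⟨t, by omega, rfl⟩
  · rw [if_neg (by omega)]
    have := Nat.mod_lt (t - a) (show 0 < b - a by omega)
    exact ⟨a + (t - a) % (b - a), by omega, rfl⟩

lemma piP_edge (hab : a < b) (hρ : G.outcome v₀ σ a = G.outcome v₀ σ b)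
    (hE : ∀ t, t < b → G.E (G.outcome v₀ σ t) (G.outcome v₀ σ (t + 1))) (t : ℕ) :
    G.E (G.piP v₀ σ a b t) (G.piP v₀ σ a b (t + 1)) := by
  rcases Nat.lt_or_ge t a with h | h
  · rw [piP, if_pos (by omega), piP, if_pos (by omega)]
    exact hE t (by omega)
  · rw [G.piP_loop v₀ σ hab t h, G.piP_loop v₀ σ hab (t + 1) (by omega)]
    set p := b - a with hp
    have hp0 : 0 < p := by omega
    have hmod := Nat.mod_lt (t - a) hp0
    have hstep : t + 1 - a = (t - a) + 1 := by omega
    rw [hstep]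
    have hrw : ((t - a) + 1) % p = ((t - a) % p + 1) % p := by
      have hx : t - a + 1 = ((t - a) % p + 1) + p * ((t - a) / p) := by
        have := Nat.mod_add_div (t - a) p
        omega
      rw [hx, Nat.add_mul_mod_self_left]
    rw [hrw]
    rcases Nat.lt_or_ge ((t - a) % p + 1) p with h2 | h2
    · rw [Nat.mod_eq_of_lt h2]
      exact hE (a + (t - a) % p) (by omega)
    · have h3 : (t - a) % p + 1 = p := by omega
      have h4 : a + (t - a) % p = b - 1 := by omega
      rw [h3, Nat.mod_self, Nat.add_zero, h4, hρ]
      have := hE (b - 1) (by omega)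
      rwa [show b - 1 + 1 = b from by omega] at this

lemma isHist_ne_nil {h : List V} (hh : G.IsHist v₀ h) : h ≠ [] := by
  intro hcon
  rw [hcon] at hh
  simp [IsHist] at hh

lemma cur_eq_getD {h : List V} (hne : h ≠ []) :
    cur v₀ h = h.reverse.getD (h.length - 1) v₀ := by
  obtain ⟨x, l, rfl⟩ := List.exists_cons_of_ne_nil hne
  show x = _
  rw [List.length_cons, Nat.add_sub_cancel, rev_getD_head]

lemma nxt_isStrat (d : ℕ) (hσ : ∀ i, G.IsStratTrunc v₀ d i (σ i)) (hab : a < b)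
    (hρ : G.outcome v₀ σ a = G.outcome v₀ σ b) (hbd : b ≤ d) (hLd : L ≤ d) (i : ι) :
    G.IsStrat v₀ i (fun h => G.nxt v₀ σ a b L h) := by
  intro h hh _
  have hne := G.isHist_ne_nil v₀ hh
  have hlen : 1 ≤ h.length := List.length_pos_iff.2 hne
  show G.E _ (G.nxt v₀ σ a b L h)
  rw [nxt]
  split
  · next hOn =>
    have hcur : cur v₀ h = G.piP v₀ σ a b (h.length - 1) := by
      rw [cur_eq_getD v₀ hne]
      exact hOn _ (by omega)
    rw [hcur]
    have hE := G.piP_edge v₀ σ hab hρ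
      (fun t ht => G.edge_outcome v₀ σ d (G.profile_edge_prop v₀ hσ) t (by omega))
      (h.length - 1)
    rwa [show h.length - 1 + 1 = h.length from by omega] at hE
  · split
    · next _ hcond => exact hσ _ h hh (le_trans hcond.2 hLd) rfl
    · exact G.safe_edge _ _

lemma outcome_nxt_eq_piP (hab : a < b) :
    ∀ t, G.outcome v₀ (fun _ : ι => fun h => G.nxt v₀ σ a b L h) t = G.piP v₀ σ a b t := by
  intro t
  induction t using Nat.strong_induction_on with
  | _ t ih =>
    match t with
    | 0 =>
      rw [G.outcome_zero, G.piP_zero v₀ σ (by omega)]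
    | t + 1 =>
      rw [G.outcome_succ]
      show G.nxt v₀ σ a b L _ = _
      have hOn : G.OnP v₀ σ a b
          (G.histFrom v₀ (fun _ : ι => fun h => G.nxt v₀ σ a b L h) [v₀] t) := by
        intro k hk
        rw [G.histFrom_length] at hk
        rw [G.histFrom_getD v₀ _ t k (by simp at hk; omega)]
        exact ih k (by simp at hk; omega)
      rw [nxt, if_pos hOn, G.histFrom_length,
        show ([v₀] : List V).length + t = t + 1 by simp [Nat.add_comm]]

lemma dev_hist_facts (p : ι → List V → V) (j : ι)
    (hpj : ∀ i, i ≠ j → p i = fun h => G.nxt v₀ σ a b L h) (hab : a < b)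
    (tstar : ℕ) (hts : ∀ k < tstar, G.outcome v₀ p k = G.piP v₀ σ a b k)
    (hne : G.outcome v₀ p tstar ≠ G.piP v₀ σ a b tstar) :
    (∀ t < tstar, G.OnP v₀ σ a b (G.histFrom v₀ p [v₀] t)) ∧
    (∀ t, tstar ≤ t → ¬ G.OnP v₀ σ a b (G.histFrom v₀ p [v₀] t) ∧
       G.devP v₀ σ a b (G.histFrom v₀ p [v₀] t) = tstar) ∧
    1 ≤ tstar ∧ G.owner (G.piP v₀ σ a b (tstar - 1)) = j := by
  have hOn : ∀ t < tstar, G.OnP v₀ σ a b (G.histFrom v₀ p [v₀] t) := by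
    intro t ht k hk
    rw [G.histFrom_length] at hk
    rw [G.histFrom_getD v₀ _ t k (by simp at hk; omega)]
    exact hts k (by simp at hk; omega)
  have hOff : ∀ t, tstar ≤ t → ¬ G.OnP v₀ σ a b (G.histFrom v₀ p [v₀] t) ∧
      G.devP v₀ σ a b (G.histFrom v₀ p [v₀] t) = tstar := by
    intro t ht
    have hlen : (G.histFrom v₀ p [v₀] t).length = 1 + t := G.histFrom_length v₀ p [v₀] t
    have hmis : (G.histFrom v₀ p [v₀] t).reverse.getD tstar v₀ ≠ G.piP v₀ σ a b tstar := by
      rw [G.histFrom_getD v₀ _ t tstar ht]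
      exact hne
    constructor
    · intro hcon
      exact hmis (hcon tstar (by omega))
    · refine le_antisymm (Nat.sInf_le ⟨by omega, hmis⟩) (le_csInf ⟨tstar, by omega, hmis⟩ ?_)
      intro c hc
      by_contra hlt
      exact hc.2 (by rw [G.histFrom_getD v₀ _ t c (by omega)]; exact hts c (by omega))
  have h1 : 1 ≤ tstar := by
    by_contra hcon
    have h0 : tstar = 0 := by omega
    rw [h0] at hne
    exact hne (by rw [G.outcome_zero, G.piP_zero v₀ σ (by omega)])
  refine ⟨hOn, hOff, h1, ?_⟩
  by_contra hcon
  have hmove := G.outcome_succ v₀ p (tstar - 1)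
  rw [show tstar - 1 + 1 = tstar from by omega] at hmove
  rw [hts (tstar - 1) (by omega)] at hmove
  rw [hpj _ hcon] at hmove
  refine hne ?_
  rw [hmove]
  show G.nxt v₀ σ a b L _ = _
  rw [nxt, if_pos (hOn _ (by omega)), G.histFrom_length,
    show ([v₀] : List V).length + (tstar - 1) = tstar by simp; omega]

lemma mod_shift (x k p : ℕ) : (x + k) % p = (x % p + k) % p := by
  conv_lhs => rw [← Nat.mod_add_div x p]
  rw [Nat.add_right_comm, Nat.add_mul_mod_self_left]

lemma devP_spec {h : List V} (hoff : ¬ G.OnP v₀ σ a b h) :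
    G.devP v₀ σ a b h < h.length ∧
    h.reverse.getD (G.devP v₀ σ a b h) v₀ ≠ G.piP v₀ σ a b (G.devP v₀ σ a b h) ∧
    ∀ c < G.devP v₀ σ a b h, h.reverse.getD c v₀ = G.piP v₀ σ a b c := by
  rw [OnP] at hoff
  push_neg at hoff
  obtain ⟨k, hk, hnek⟩ := hoff
  have hne' : {k | k < h.length ∧ h.reverse.getD k v₀ ≠ G.piP v₀ σ a b k}.Nonempty :=
    ⟨k, hk, hnek⟩
  have hmem := Nat.sInf_mem hne'
  refine ⟨hmem.1, hmem.2, fun c hc => ?_⟩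
  by_contra hcc
  exact Nat.notMem_of_lt_sInf hc ⟨lt_trans hc hmem.1, hcc⟩

variable (a b)

/-- The state abstraction for the finite-memory property of `nxt`. -/
noncomputable def stFn (K : ℕ) (h : List V) : List V ⊕ Bool × ℕ × ι × V :=
  if h.length ≤ K then Sum.inl h
  else Sum.inr (if G.OnP v₀ σ a b h then true else false,
    (h.length - a) % (b - a),
    G.owner (G.piP v₀ σ a b (G.devP v₀ σ a b h - 1)),
    cur v₀ h)

/-- The answering function reading off `nxt` from the state. -/
noncomputable def ansFn (s : List V ⊕ Bool × ℕ × ι × V) (δ : List V) : V :=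
  match s with
  | Sum.inl l => G.nxt v₀ σ a b L (δ ++ l)
  | Sum.inr (o, pos, jd, cv) =>
      if o = true ∧ ∀ k < δ.length, δ.reverse.getD k v₀
          = G.outcome v₀ σ (a + (pos + k) % (b - a)) then
        G.outcome v₀ σ (a + (pos + δ.length) % (b - a))
      else
        G.safe
          (if o = true then
            (if sInf {k | k < δ.length ∧ δ.reverse.getD k v₀
                ≠ G.outcome v₀ σ (a + (pos + k) % (b - a))} = 0 then G.owner cv
             else G.owner (G.outcome v₀ σ (a + (pos + (sInf {k | k < δ.length ∧
                δ.reverse.getD k v₀ ≠ G.outcome v₀ σ (a + (pos + k) % (b - a))} - 1))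
                % (b - a))))
           else jd)
          (δ.headD cv)

lemma nxt_append (hab : a < b) {K : ℕ} (hbK : b ≤ K) (hLK : L ≤ K)
    (h δ : List V) (hh : K < h.length) :
    G.nxt v₀ σ a b L (δ ++ h) = G.ansFn v₀ σ a b L (G.stFn v₀ σ a b K h) δ := by
  have hp0 : 0 < b - a := by omega
  set n := h.length with hn
  set pos := (n - a) % (b - a) with hpos
  set q : ℕ → V := fun k => G.outcome v₀ σ (a + (pos + k) % (b - a)) with hq
  have hf1 : ∀ k, G.piP v₀ σ a b (n + k) = q k := by
    intro k
    rw [G.piP_loop v₀ σ hab _ (by omega), hq]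
    rw [show n + k - a = (n - a) + k from by omega, mod_shift]
  have hrevlen : h.reverse.length = n := List.length_reverse
  have hf2l : ∀ m < n, (δ ++ h).reverse.getD m v₀ = h.reverse.getD m v₀ := by
    intro m hm
    rw [List.reverse_append, List.getD_append _ _ _ _ (by omega)]
  have hf2r : ∀ k, (δ ++ h).reverse.getD (n + k) v₀ = δ.reverse.getD k v₀ := by
    intro k
    rw [List.reverse_append, List.getD_append_right _ _ _ _ (by omega)]
    congr 1
    omega
  have hlen2 : (δ ++ h).length = δ.length + n := by rw [List.length_append]
  have hcvpi : G.OnP v₀ σ a b h → cur v₀ h = G.piP v₀ σ a b (n - 1) := by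
    intro hOn
    have hne : h ≠ [] := by
      intro hcon
      rw [hcon] at hn
      simp [hn] at hh
    rw [cur_eq_getD v₀ hne]
    exact hOn _ (by omega)
  have hcur2 : cur v₀ (δ ++ h) = δ.headD (cur v₀ h) := by
    cases δ with
    | nil => rfl
    | cons x l => rfl
  rw [stFn, if_neg (by omega)]
  by_cases hOn : G.OnP v₀ σ a b h
  · rw [if_pos hOn]
    show G.nxt v₀ σ a b L (δ ++ h) = G.ansFn v₀ σ a b L (Sum.inr (true, pos, _, cur v₀ h)) δ
    by_cases hm : ∀ k < δ.length, δ.reverse.getD k v₀ = q k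
    · have hOn2 : G.OnP v₀ σ a b (δ ++ h) := by
        intro m hm2
        rw [hlen2] at hm2
        rcases Nat.lt_or_ge m n with h1 | h1
        · rw [hf2l m h1]
          exact hOn m (by omega)
        · obtain ⟨k, rfl⟩ : ∃ k, m = n + k := ⟨m - n, by omega⟩
          rw [hf2r k, hf1 k]
          exact hm k (by omega)
      rw [nxt, if_pos hOn2, ansFn]
      rw [if_pos ⟨rfl, hm⟩, hlen2, show δ.length + n = n + δ.length from by omega, hf1]
    · push_neg at hm
      obtain ⟨k1, hk1, hk1ne⟩ := hm
      have hsne : {k | k < δ.length ∧ δ.reverse.getD k v₀ ≠ q k}.Nonempty := ⟨k1, hk1, hk1ne⟩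
      set k₀ := sInf {k | k < δ.length ∧ δ.reverse.getD k v₀ ≠ q k} with hk₀
      have hk0mem := Nat.sInf_mem hsne
      have hk0lt : k₀ < δ.length := hk0mem.1
      have hOff2 : ¬ G.OnP v₀ σ a b (δ ++ h) := by
        intro hcon
        refine hk0mem.2 ?_
        have := hcon (n + k₀) (by omega)
        rwa [hf2r, hf1] at this
      have hdev : G.devP v₀ σ a b (δ ++ h) = n + k₀ := by
        rw [devP]
        refine le_antisymm (Nat.sInf_le ⟨by omega, by rw [hf2r, hf1]; exact hk0mem.2⟩)
          (le_csInf ⟨n + k₀, by omega, by rw [hf2r, hf1]; exact hk0mem.2⟩ ?_)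
        intro c hc
        by_contra hlt
        push_neg at hlt
        rcases Nat.lt_or_ge c n with h1 | h1
        · exact hc.2 (by rw [hf2l c h1]; exact hOn c (by omega))
        · obtain ⟨k, rfl⟩ : ∃ k, c = n + k := ⟨c - n, by omega⟩
          have hkk : k < k₀ := by omega
          refine Nat.notMem_of_lt_sInf hkk ⟨by omega, ?_⟩
          have := hc.2
          rwa [hf2r, hf1] at this
      rw [nxt, if_neg hOff2, if_neg (by rw [hlen2]; omega), ansFn]
      rw [if_neg (by rintro ⟨-, hcon⟩; exact hk0mem.2 (hcon k₀ hk0mem.1))]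
      rw [if_pos rfl, hdev, hcur2]
      congr 1
      rcases Nat.eq_zero_or_pos k₀ with h0 | h0
      · rw [← hk₀, h0, if_pos rfl]
        rw [show n + 0 - 1 = n - 1 from by omega, ← hcvpi hOn]
      · rw [← hk₀, if_neg (by omega)]
        rw [show n + k₀ - 1 = n + (k₀ - 1) from by omega, hf1]
  · rw [if_neg hOn]
    show G.nxt v₀ σ a b L (δ ++ h)
        = G.ansFn v₀ σ a b L (Sum.inr (false, pos,
            G.owner (G.piP v₀ σ a b (G.devP v₀ σ a b h - 1)), cur v₀ h)) δ
    obtain ⟨hd1, hd2, hd3⟩ := G.devP_spec v₀ σ hOn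
    have hOff2 : ¬ G.OnP v₀ σ a b (δ ++ h) := by
      intro hcon
      refine hOn (fun m hm2 => ?_)
      rw [← hf2l m hm2]
      exact hcon m (by omega)
    have hmemb : G.devP v₀ σ a b h ∈ {k | k < (δ ++ h).length ∧
        (δ ++ h).reverse.getD k v₀ ≠ G.piP v₀ σ a b k} := by
      refine ⟨by omega, ?_⟩
      rw [hf2l _ hd1]
      exact hd2
    have hdev : G.devP v₀ σ a b (δ ++ h) = G.devP v₀ σ a b h := by
      refine le_antisymm (Nat.sInf_le hmemb) (le_csInf ⟨_, hmemb⟩ ?_)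
      intro c hc
      by_contra hlt
      push_neg at hlt
      refine hc.2 ?_
      rw [hf2l c (by omega)]
      exact hd3 c hlt
    rw [nxt, if_neg hOff2, if_neg (by rw [hlen2]; omega), ansFn]
    rw [if_neg (by rintro ⟨hcon, -⟩; simp at hcon)]
    rw [if_neg (by simp), hdev, hcur2]

lemma finMem_nxt (hab : a < b) : FinMem (fun h : List V => G.nxt v₀ σ a b L h) := by
  set K := L + b + 2 with hK
  have key : ∀ h δ : List V, G.nxt v₀ σ a b L (δ ++ h)
      = G.ansFn v₀ σ a b L (G.stFn v₀ σ a b K h) δ := by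
    intro h δ
    by_cases hh : h.length ≤ K
    · rw [stFn, if_pos hh]
      rfl
    · exact G.nxt_append v₀ σ a b L hab (K := K) (by omega) (by omega) h δ (by omega)
  have hst : (Set.range (G.stFn v₀ σ a b K)).Finite := by
    refine Set.Finite.subset (Set.Finite.union ((List.finite_length_le V K).image Sum.inl)
      ((Set.Finite.prod Set.finite_univ
        (Set.Finite.prod (Set.finite_Iio (b - a)) Set.finite_univ)).image Sum.inr)) ?_
    rintro s ⟨h, rfl⟩
    rw [stFn]
    split
    · next hle => exact Or.inl ⟨h, hle, rfl⟩
    · next hgt =>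
        exact Or.inr ⟨_, ⟨Set.mem_univ _, Nat.mod_lt _ (by omega), Set.mem_univ _⟩, rfl⟩
  rw [FinMem]
  have heq : (fun h : List V => fun δ : List V => G.nxt v₀ σ a b L (δ ++ h))
      = fun h => G.ansFn v₀ σ a b L (G.stFn v₀ σ a b K h) := by
    funext h δ
    exact key h δ
  show (Set.range fun h : List V => fun δ : List V => G.nxt v₀ σ a b L (δ ++ h)).Finite
  rw [heq]
  refine Set.Finite.subset (hst.image (G.ansFn v₀ σ a b L)) ?_
  rintro f ⟨h, rfl⟩
  exact ⟨_, ⟨h, rfl⟩, rfl⟩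

end Construction

section Glue

variable (G : QRGame ι V) (v₀ : V) (p q : ι → List V → V)

lemma hst_cons (t : ℕ) :
    G.histFrom v₀ p [v₀] (t + 1) = G.outcome v₀ p (t + 1) :: G.histFrom v₀ p [v₀] t := by
  show _ :: _ = _ :: _
  rw [G.outcome_succ v₀ p t, G.outcome_eq_cur v₀ p t]

lemma hst_ext : ∀ t, (∀ k ≤ t, G.outcome v₀ p k = G.outcome v₀ q k) →
    G.histFrom v₀ p [v₀] t = G.histFrom v₀ q [v₀] t := by
  intro t
  induction t with
  | zero => intro _; rfl
  | succ n ih =>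
    intro hag
    rw [G.hst_cons v₀ p n, G.hst_cons v₀ q n, ih (fun k hk => hag k (by omega)),
      hag (n + 1) le_rfl]

end Glue

end QRGame

lemma prec_irrefl {ι : Type} (j : ι) (x : ι → ℕ∞) : ¬ Prec j x x := by
  rintro (h | ⟨-, -, i, hi⟩)
  · exact lt_irrefl _ h
  · exact lt_irrefl _ hi

namespace QRGame

end QRGame

/-- Let `Γ = 2·|Π|·|V|` and `d = Γ + 3·|V|`.  If there exists a goal-optimal
and dev-optimal secure equilibrium in the truncated game `𝒯^d`, then there
exists a finite-memory secure equilibrium in `(G, v₀)`. -/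
theorem secure_equilibrium_from_truncated
    {ι V : Type} [Fintype ι] [Fintype V] [DecidableEq ι]
    (G : QRGame ι V) (v₀ : V) (Γ d : ℕ)
    (hΓ : Γ = 2 * Fintype.card ι * Fintype.card V)
    (hd : d = Γ + 3 * Fintype.card V)
    (hex : ∃ σ : ι → List V → V, (∀ i, G.IsStratTrunc v₀ d i (σ i)) ∧
      G.IsSecureTrunc v₀ d σ ∧ G.GoalOptTrunc v₀ d σ Γ ∧ G.DevOptTrunc v₀ d σ) :
    ∃ τ : ι → List V → V, G.IsProfile v₀ τ ∧ G.IsSecure v₀ τ ∧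
      ∀ i, QRGame.FinMem (τ i) := by
  classical
  obtain ⟨σ, hσ, hsec, hgoal, hdevopt⟩ := hex
  set nV := Fintype.card V with hnV
  have hV1 : 1 ≤ nV := Fintype.card_pos_iff.2 ⟨v₀⟩
  have hι1 : 1 ≤ Fintype.card ι := Fintype.card_pos_iff.2 ⟨G.owner v₀⟩
  have hΓ2 : 2 ≤ Γ := by
    calc 2 = 2 * 1 * 1 := by ring
    _ ≤ 2 * Fintype.card ι * nV := Nat.mul_le_mul (Nat.mul_le_mul le_rfl hι1) hV1
    _ = Γ := by rw [hΓ]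
  -- the cost profile in the truncated game
  set xtr : ι → ℕ∞ := fun i => G.costLT i (G.outcome v₀ σ) (d + 1) with hxtr
  -- the bound `M` and the deviation horizon `N`
  set M := (⨆ i ∈ {i : ι | G.costLT i (G.outcome v₀ σ) (d + 1) ≠ ⊤},
      G.costLT i (G.outcome v₀ σ) (d + 1)).toNat with hM
  set N := M + nV with hN
  have hdevB : G.devBoundTrunc v₀ d σ = N := rfl
  have hsup_le : (⨆ i ∈ {i : ι | G.costLT i (G.outcome v₀ σ) (d + 1) ≠ ⊤},
      G.costLT i (G.outcome v₀ σ) (d + 1)) ≤ (Γ : ℕ∞) := by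
    refine iSup₂_le fun i hi => le_of_lt (hgoal i hi)
  have hMΓ : M ≤ Γ := by
    rw [hM]
    have h1 : (⨆ i ∈ {i : ι | G.costLT i (G.outcome v₀ σ) (d + 1) ≠ ⊤},
        G.costLT i (G.outcome v₀ σ) (d + 1)) ≠ ⊤ :=
      ne_top_of_le_ne_top (by simp) hsup_le
    have h2 := ENat.coe_toNat h1
    have := hsup_le
    rw [← h2] at this
    exact_mod_cast this
  have hfinM : ∀ i, xtr i ≠ ⊤ → xtr i ≤ (M : ℕ∞) := by
    intro i hi
    have h1 : xtr i ≤ (⨆ i ∈ {i : ι | G.costLT i (G.outcome v₀ σ) (d + 1) ≠ ⊤},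
        G.costLT i (G.outcome v₀ σ) (d + 1)) := by
      exact le_iSup₂ (f := fun i _ => G.costLT i (G.outcome v₀ σ) (d + 1)) i hi
    have h2 : (⊤ : ℕ∞) ≠ ⊤ → False := fun h => h rfl
    have h3 := ENat.coe_toNat (ne_top_of_le_ne_top (by simp) hsup_le)
    rw [hM, h3]
    exact h1
  have hfinΓ : ∀ i, xtr i ≠ ⊤ → xtr i < (Γ : ℕ∞) := fun i hi => hgoal i hi
  -- pigeonhole: a repeated vertex on `ρ` between `Γ` and `Γ + nV`
  obtain ⟨a, b, hΓa, hab, hbΓ, hρab⟩ : ∃ a b : ℕ, Γ ≤ a ∧ a < b ∧ b ≤ Γ + nV ∧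
      G.outcome v₀ σ a = G.outcome v₀ σ b := by
    obtain ⟨x, y, hxy, hfxy⟩ := Fintype.exists_ne_map_eq_of_card_lt
      (fun k : Fin (nV + 1) => G.outcome v₀ σ (Γ + (k : ℕ))) (by simp [hnV])
    rcases Nat.lt_or_ge (x : ℕ) (y : ℕ) with h | h
    · exact ⟨Γ + x, Γ + y, by omega, by omega, by omega, hfxy⟩
    · have hne : (y : ℕ) < (x : ℕ) := by
        rcases Nat.lt_or_ge (y : ℕ) (x : ℕ) with h2 | h2
        · exact h2
        · exact absurd (Fin.ext (by omega)) hxy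
      exact ⟨Γ + y, Γ + x, by omega, by omega, by omega, hfxy.symm⟩
  have hLd : N ≤ d := by omega
  have hLnV : N + nV ≤ d := by omega
  have hbd : b + nV ≤ d := by omega
  -- the profile
  set τ : ι → List V → V := fun _ : ι => fun h => G.nxt v₀ σ a b N h with hτ
  have hρE : ∀ t, t < b → G.E (G.outcome v₀ σ t) (G.outcome v₀ σ (t + 1)) :=
    fun t ht => G.edge_outcome v₀ σ d (G.profile_edge_prop v₀ hσ) t (by omega)
  have hτstrat : G.IsProfile v₀ τ :=
    fun i => G.nxt_isStrat v₀ σ N d hσ hab hρab (by omega) hLd i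
  have hτfin : ∀ i, QRGame.FinMem (τ i) := fun _ => G.finMem_nxt v₀ σ a b N hab
  refine ⟨τ, hτstrat, ?_, hτfin⟩
  -- it remains to prove that τ is a secure equilibrium
  rintro ⟨j, σ', hσ', hPrec⟩
  have houtτ : ∀ t, G.outcome v₀ τ t = G.piP v₀ σ a b t :=
    G.outcome_nxt_eq_piP v₀ σ N hab
  have hfull : G.fullPlay v₀ τ [v₀] = G.piP v₀ σ a b := funext houtτ
  rw [hfull] at hPrec
  -- the value of the cost profile on the main path
  have hxpi : ∀ i, G.cost i (G.piP v₀ σ a b) = xtr i := by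
    intro i
    by_cases hi : xtr i = ⊤
    · rw [hi, G.cost_eq_top_iff]
      intro l hl
      obtain ⟨s, hs, hval⟩ := G.piP_val v₀ σ hab l
      rw [hval] at hl
      exact (G.costLT_eq_top_iff i (G.outcome v₀ σ) (d + 1)).1 hi s (by omega) hl
    · obtain ⟨k, hkm, hck, hk, hmin⟩ := G.costLT_spec i (G.outcome v₀ σ) hi
      have hxk : xtr i = (k : ℕ∞) := hck
      have hkΓ : k < Γ := by
        have h1 := hfinΓ i hi
        rw [hxk] at h1
        exact_mod_cast h1
      rw [hxk]
      refine G.cost_eq i _ ?_ ?_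
      · rw [G.piP_eq_outcome v₀ σ hab hρab k (by omega)]
        exact hk
      · intro l hl hmem
        rw [G.piP_eq_outcome v₀ σ hab hρab l (by omega)] at hmem
        exact hmin l hl hmem
  -- facts about the deviation play
  set p := Function.update τ j σ' with hp
  have hpprof : G.IsProfile v₀ p := by
    intro i
    by_cases hij : i = j
    · subst hij; rw [hp, Function.update_self]; exact hσ'
    · rw [hp, Function.update_of_ne hij]; exact hτstrat i
  have hpedge : ∀ h, G.IsHist v₀ h → G.E (QRGame.cur v₀ h) (p (G.owner (QRGame.cur v₀ h)) h) :=
    fun h hh => hpprof _ h hh rfl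
  have hE' : ∀ t, G.E (G.outcome v₀ p t) (G.outcome v₀ p (t + 1)) :=
    fun t => G.edge_outcome v₀ p (t + 1) (fun h hh _ => hpedge h hh) t le_rfl
  have hhist' : ∀ t, G.IsHist v₀ (G.histFrom v₀ p [v₀] t) :=
    fun t => G.isHist_hst v₀ p t (fun h hh _ => hpedge h hh) t le_rfl
  have hfull' : G.fullPlay v₀ p [v₀] = G.outcome v₀ p := rfl
  rw [hfull'] at hPrec
  by_cases hall : ∀ t, G.outcome v₀ p t = G.piP v₀ σ a b t
  · rw [funext hall] at hPrec
    exact prec_irrefl j _ hPrec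
  push_neg at hall
  set tstar := sInf {t | G.outcome v₀ p t ≠ G.piP v₀ σ a b t} with htstar
  have htsmem : G.outcome v₀ p tstar ≠ G.piP v₀ σ a b tstar := Nat.sInf_mem hall
  have htsmin : ∀ k < tstar, G.outcome v₀ p k = G.piP v₀ σ a b k := by
    intro k hk
    by_contra hcon
    exact Nat.notMem_of_lt_sInf hk hcon
  obtain ⟨hOnH, hOffH, hts1, hjdev⟩ := G.dev_hist_facts v₀ σ N p j
    (fun i hij => by rw [hp, Function.update_of_ne hij]) hab tstar htsmin htsmem
  -- avoidance of the attractors along the main path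
  have hπW : ∀ jj, xtr jj = ⊤ → ∀ t, G.piP v₀ σ a b t ∉ G.W jj := by
    intro jj hjj t
    obtain ⟨s, hs, hval⟩ := G.piP_val v₀ σ hab t
    rw [hval]
    have := G.avoid_W v₀ hσ hsec (j := jj) hjj (σ'' := σ jj)
      (fun h hh hlen ho => hσ jj h hh hlen ho) (s := s) (by omega)
    rwa [Function.update_eq_self] at this
  rcases Nat.lt_or_ge (b + 1) tstar with hlate | hearly
  · -- LATE deviation: t* ≥ b + 2
    have hyeq : ∀ i, xtr i ≠ ⊤ → G.cost i (G.outcome v₀ p) = xtr i := by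
      intro i hi
      obtain ⟨k, hkm, hck, hk, hmin⟩ := G.costLT_spec i (G.outcome v₀ σ) hi
      have hxk : xtr i = (k : ℕ∞) := hck
      have hkΓ : k < Γ := by
        have h1 := hfinΓ i hi
        rw [hxk] at h1
        exact_mod_cast h1
      rw [hxk]
      refine G.cost_eq i _ ?_ ?_
      · rw [htsmin k (by omega), G.piP_eq_outcome v₀ σ hab hρab k (by omega)]
        exact hk
      · intro l hl hmem
        rw [htsmin l (by omega), G.piP_eq_outcome v₀ σ hab hρab l (by omega)] at hmem
        exact hmin l hl hmem
    have hWall : xtr j = ⊤ → ∀ t, G.outcome v₀ p t ∉ G.W j := by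
      intro hj t
      induction t using Nat.strong_induction_on with
      | _ t ih =>
        rcases Nat.lt_or_ge t tstar with hlt | hge
        · rw [htsmin t hlt]
          exact hπW j hj t
        · obtain ⟨t', rfl⟩ : ∃ t', t = t' + 1 := ⟨t - 1, by omega⟩
          have hprev : G.outcome v₀ p t' ∉ G.W j := ih t' (by omega)
          by_cases hoj : G.owner (G.outcome v₀ p t') = j
          · exact G.W_succ_not_mem j hprev hoj (hE' t')
          · have hmove : G.outcome v₀ p (t' + 1)
                = G.nxt v₀ σ a b N (G.histFrom v₀ p [v₀] t') := by
              rw [G.outcome_succ v₀ p t', hp, Function.update_of_ne hoj]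
            rcases Nat.lt_or_ge t' tstar with hlt' | hge'
            · exfalso
              refine hoj ?_
              rw [htsmin t' hlt', show t' = tstar - 1 from by omega]
              exact hjdev
            · obtain ⟨hoff, hdev'⟩ := hOffH t' hge'
              rw [hmove, QRGame.nxt, if_neg hoff,
                if_neg (by rintro ⟨hc1, -⟩; rw [hdev'] at hc1; omega),
                hdev', hjdev, ← G.outcome_eq_cur v₀ p t']
              exact G.safe_not_mem j hprev hoj
    rcases hPrec with h1 | ⟨h2a, h2b, i0, h2c⟩
    · have h1' : G.cost j (G.outcome v₀ p) < G.cost j (G.piP v₀ σ a b) := h1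
      rw [hxpi j] at h1'
      by_cases hj : xtr j = ⊤
      · have hy : G.cost j (G.outcome v₀ p) = ⊤ := by
          rw [G.cost_eq_top_iff]
          intro l hl
          exact hWall hj l (G.F_subset_W j hl)
        rw [hy, hj] at h1'
        exact lt_irrefl _ h1'
      · rw [hyeq j hj] at h1'
        exact lt_irrefl _ h1'
    · have h2c' : G.cost i0 (G.piP v₀ σ a b) < G.cost i0 (G.outcome v₀ p) := h2c
      rw [hxpi i0] at h2c'
      by_cases hi0 : xtr i0 = ⊤
      · rw [hi0] at h2c'
        exact not_top_lt h2c'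
      · rw [hyeq i0 hi0] at h2c'
        exact lt_irrefl _ h2c'
  · -- EARLY deviation: t* ≤ b + 1
    have hσ'tr : G.IsStratTrunc v₀ d j σ' := fun h hh _ ho => hσ' h hh ho
    -- the deviation play agrees with the truncated deviation play up to time N
    have houtBB : ∀ t, t ≤ N → G.outcome v₀ p t = G.outcome v₀ (Function.update σ j σ') t := by
      intro t
      induction t using Nat.strong_induction_on with
      | _ t ih =>
        intro htN
        match t with
        | 0 => rfl
        | t + 1 =>
          have hagree : ∀ k ≤ t, G.outcome v₀ p k
              = G.outcome v₀ (Function.update σ j σ') k :=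
            fun k hk => ih k (by omega) (by omega)
          have hh : G.histFrom v₀ p [v₀] t
              = G.histFrom v₀ (Function.update σ j σ') [v₀] t :=
            G.hst_ext v₀ p _ t hagree
          have hown : G.owner (G.outcome v₀ p t)
              = G.owner (G.outcome v₀ (Function.update σ j σ') t) := by
            rw [hagree t le_rfl]
          rw [G.outcome_succ v₀ p t, G.outcome_succ v₀ (Function.update σ j σ') t,
            ← hh, ← hown]
          by_cases hoj : G.owner (G.outcome v₀ p t) = j
          · rw [hoj, hp, Function.update_self, Function.update_self]
          · rw [hp, Function.update_of_ne hoj, Function.update_of_ne hoj]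
            show G.nxt v₀ σ a b N (G.histFrom v₀ p [v₀] t) = _
            rcases Nat.lt_or_ge t tstar with hlt | hge
            · have hOn := hOnH t hlt
              have htb : t + 1 ≤ b := by
                by_contra hcon
                refine hoj ?_
                rw [htsmin t hlt, show t = tstar - 1 from by omega]
                exact hjdev
              have hagree2 : ∀ k ≤ t, G.outcome v₀ p k = G.outcome v₀ σ k := by
                intro k hk
                rw [htsmin k (by omega), G.piP_eq_outcome v₀ σ hab hρab k (by omega)]
              have hh2 : G.histFrom v₀ p [v₀] t = G.histFrom v₀ σ [v₀] t :=
                G.hst_ext v₀ p σ t hagree2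
              rw [QRGame.nxt, if_pos hOn, G.histFrom_length,
                show ([v₀] : List V).length + t = t + 1 by simp [Nat.add_comm],
                G.piP_eq_outcome v₀ σ hab hρab (t + 1) htb, hh2,
                show G.owner (G.outcome v₀ p t) = G.owner (G.outcome v₀ σ t) from by
                  rw [hagree2 t le_rfl]]
              exact G.outcome_succ v₀ σ t
            · obtain ⟨hoff, hdev'⟩ := hOffH t hge
              have hcond : G.devP v₀ σ a b (G.histFrom v₀ p [v₀] t) ≤ b + 1 ∧
                  (G.histFrom v₀ p [v₀] t).length ≤ N := by
                constructor
                · rw [hdev']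
                  omega
                · rw [G.histFrom_length]
                  simp
                  omega
              rw [QRGame.nxt, if_neg hoff, if_pos hcond, ← G.outcome_eq_cur v₀ p t]
    -- value of the truncated costs at horizon N
    have hxd : ∀ i, G.costLT i (G.outcome v₀ σ) N = xtr i := by
      intro i
      by_cases hi : xtr i = ⊤
      · rw [hi, G.costLT_eq_top_iff]
        intro l hl
        exact (G.costLT_eq_top_iff i (G.outcome v₀ σ) (d + 1)).1 hi l (by omega)
      · obtain ⟨k, hkm, hck, hk, hmin⟩ := G.costLT_spec i (G.outcome v₀ σ) hi
        have hxk : xtr i = (k : ℕ∞) := hck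
        have hkM : k ≤ M := by
          have h1 := hfinM i hi
          rw [hxk] at h1
          exact_mod_cast h1
        rw [hxk]
        exact G.costLT_eq i _ (show k < N by omega) hk hmin
    have hyd : ∀ i, G.costLT i (G.outcome v₀ (Function.update σ j σ')) N
        = G.costLT i (G.outcome v₀ p) N := by
      intro i
      exact G.costLT_congr i (G.outcome v₀ (Function.update σ j σ')) (G.outcome v₀ p)
        (fun k hk => (houtBB k (by omega)).symm)
    -- if `xtr j = ⊤` then the deviator never reaches its goal
    have hWall2 : xtr j = ⊤ → ∀ t, G.outcome v₀ p t ∉ G.W j := by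
      intro hj t
      induction t using Nat.strong_induction_on with
      | _ t ih =>
        rcases le_or_gt t N with hle | hgt
        · rw [houtBB t hle]
          exact G.avoid_W v₀ hσ hsec hj hσ'tr (s := t) (by omega)
        · obtain ⟨t', rfl⟩ : ∃ t', t = t' + 1 := ⟨t - 1, by omega⟩
          have hprev : G.outcome v₀ p t' ∉ G.W j := ih t' (by omega)
          by_cases hoj : G.owner (G.outcome v₀ p t') = j
          · exact G.W_succ_not_mem j hprev hoj (hE' t')
          · have hmove : G.outcome v₀ p (t' + 1)
                = G.nxt v₀ σ a b N (G.histFrom v₀ p [v₀] t') := by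
              rw [G.outcome_succ v₀ p t', hp, Function.update_of_ne hoj]
            rcases Nat.lt_or_ge t' tstar with hlt' | hge'
            · rw [hmove, QRGame.nxt, if_pos (hOnH t' hlt'), G.histFrom_length,
                show ([v₀] : List V).length + t' = t' + 1 by simp [Nat.add_comm]]
              exact hπW j hj (t' + 1)
            · obtain ⟨hoff, hdev'⟩ := hOffH t' hge'
              rw [hmove, QRGame.nxt, if_neg hoff,
                if_neg (by
                  rintro ⟨-, hc2⟩
                  rw [G.histFrom_length] at hc2
                  simp at hc2
                  omega),
                hdev', hjdev, ← G.outcome_eq_cur v₀ p t']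
              exact G.safe_not_mem j hprev hoj
    refine hdevopt j σ' hσ'tr ?_
    rw [hdevB]
    rcases hPrec with h1 | ⟨h2a, h2b, i0, h2c⟩
    · -- the deviator improves in the full game
      have h1' : G.cost j (G.outcome v₀ p) < G.cost j (G.piP v₀ σ a b) := h1
      rw [hxpi j] at h1'
      by_cases hj : xtr j = ⊤
      · exfalso
        have hy : G.cost j (G.outcome v₀ p) = ⊤ := by
          rw [G.cost_eq_top_iff]
          intro l hl
          exact hWall2 hj l (G.F_subset_W j hl)
        rw [hy, hj] at h1'
        exact lt_irrefl _ h1'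
      · left
        show G.costLT j (G.outcome v₀ (Function.update σ j σ')) N
          < G.costLT j (G.outcome v₀ σ) N
        rw [hyd j, hxd j]
        have hylt : G.cost j (G.outcome v₀ p) < (N : ℕ∞) := by
          refine lt_of_lt_of_le h1' (le_trans (hfinM j hj) ?_)
          exact Nat.cast_le.2 (Nat.le_add_right M nV)
        rw [G.costLT_eq_cost j _ hylt]
        exact h1'
    · -- spite deviation
      have h2a' : G.cost j (G.piP v₀ σ a b) = G.cost j (G.outcome v₀ p) := h2a
      rw [hxpi j] at h2a'
      have h2b' : ∀ i, xtr i ≤ G.cost i (G.outcome v₀ p) := by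
        intro i
        have hthis : G.cost i (G.piP v₀ σ a b) ≤ G.cost i (G.outcome v₀ p) := h2b i
        rwa [hxpi i] at hthis
      have h2c' : xtr i0 < G.cost i0 (G.outcome v₀ p) := by
        have hthis : G.cost i0 (G.piP v₀ σ a b) < G.cost i0 (G.outcome v₀ p) := h2c
        rwa [hxpi i0] at hthis
      right
      refine ⟨?_, ?_, i0, ?_⟩
      · -- equal for j
        show G.costLT j (G.outcome v₀ σ) N = G.costLT j (G.outcome v₀ (Function.update σ j σ')) N
        rw [hyd j, hxd j]
        by_cases hj : xtr j = ⊤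
        · rw [hj, G.costLT_eq_top_of_le j _ (by rw [← h2a', hj]; exact le_top)]
        · have hyj : G.cost j (G.outcome v₀ p) = xtr j := h2a'.symm
          have hlt : G.cost j (G.outcome v₀ p) < (N : ℕ∞) := by
            rw [hyj]
            refine lt_of_le_of_lt (hfinM j hj) ?_
            exact Nat.cast_lt.2 (show M < M + nV by omega)
          rw [G.costLT_eq_cost j _ hlt, hyj]
      · -- all costs do not decrease
        intro i
        show G.costLT i (G.outcome v₀ σ) N ≤ G.costLT i (G.outcome v₀ (Function.update σ j σ')) N
        rw [hyd i, hxd i]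
        by_cases hi : xtr i = ⊤
        · have hyi : G.cost i (G.outcome v₀ p) = ⊤ := top_le_iff.1 (hi ▸ h2b' i)
          rw [hi, G.costLT_eq_top_of_le i _ (by rw [hyi]; exact le_top)]
        · rcases lt_or_ge (G.cost i (G.outcome v₀ p)) ((N : ℕ∞)) with hlt | hge
          · rw [G.costLT_eq_cost i _ hlt]
            exact h2b' i
          · rw [G.costLT_eq_top_of_le i _ hge]
            exact le_top
      · -- some cost strictly increases
        show G.costLT i0 (G.outcome v₀ σ) N < G.costLT i0 (G.outcome v₀ (Function.update σ j σ')) N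
        rw [hyd i0, hxd i0]
        have hi0 : xtr i0 ≠ ⊤ := fun h => not_top_lt (h ▸ h2c')
        rcases lt_or_ge (G.cost i0 (G.outcome v₀ p)) ((N : ℕ∞)) with hlt | hge
        · rw [G.costLT_eq_cost i0 _ hlt]
          exact h2c'
        · rw [G.costLT_eq_top_of_le i0 _ hge]
          exact Ne.lt_top hi0
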